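/- In the Euclidean plane ℝ², let Z_0 = {0} × ℝ be the y-axis and Z_1 = {(x, e^x) : x ∈ ℝ} the graph of the exponential function. Then for every s ≥ 0, the pair of thickened sets (Z_0)_s and (Z_1)_s is not polynomially excisive: for every μ ≥ 1 there exists r ≥ 0 such that ((Z_0)_s)_r ∩ ((Z_1)_s)_r is not contained in ((Z_0)_s ∩ (Z_1)_s)_{r^μ}. -/
import Mathlib

open Metric Set

lemma coord_abs_le_dist (x y : EuclideanSpace ℝ (Fin 2)) (i : Fin 2) :
    |x i - y i| ≤ dist x y := by
  rw [EuclideanSpace.dist_eq]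
  have h1 : |x i - y i| = Real.sqrt ((x i - y i) ^ 2) := by
    rw [Real.sqrt_sq_eq_abs]
  rw [h1]
  apply Real.sqrt_le_sqrt
  have := Finset.single_le_sum (f := fun j => dist (x j) (y j) ^ 2)
    (fun j _ => sq_nonneg _) (Finset.mem_univ i)
  simpa [Real.dist_eq, sq_abs] using this

/-- In the Euclidean plane, the `y`-axis `Z₀` and the graph `Z₁` of the exponential function
do not have polynomially excisive thickenings: for every `s ≥ 0` and every exponent `μ ≥ 1`
there is some `r ≥ 0` for which the polynomial excisiveness inclusion fails. -/
theorem axis_and_exp_graph_not_polyExcisive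
    (Z₀ Z₁ : Set (EuclideanSpace ℝ (Fin 2)))
    (hZ₀ : Z₀ = {p : EuclideanSpace ℝ (Fin 2) | p 0 = 0})
    (hZ₁ : Z₁ = {p : EuclideanSpace ℝ (Fin 2) | p 1 = Real.exp (p 0)}) :
    ∀ s : ℝ, 0 ≤ s → ∀ μ : ℝ, 1 ≤ μ →
      ∃ r : ℝ, 0 ≤ r ∧
        ¬ (cthickening r (cthickening s Z₀) ∩ cthickening r (cthickening s Z₁) ⊆
            cthickening (r ^ μ) (cthickening s Z₀ ∩ cthickening s Z₁)) := by
  intro s hs μ hμ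
  set C : ℝ := Real.exp (2 * s + 1) + s + 1 with hC
  have hC0 : 0 < C := by positivity
  -- choose r large
  have hev : ∀ᶠ r in Filter.atTop, (C + 2 ≤ Real.exp r / r ^ μ ∧ 1 ≤ r) :=
    ((tendsto_exp_div_rpow_atTop μ).eventually_ge_atTop (C + 2)).and
      (Filter.eventually_ge_atTop 1)
  obtain ⟨r, hrdiv, hr1⟩ := hev.exists
  have hr0 : (0:ℝ) ≤ r := le_trans zero_le_one hr1
  have hrpow1 : (1:ℝ) ≤ r ^ μ := Real.one_le_rpow hr1 (le_trans zero_le_one hμ)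
  have hrpow0 : (0:ℝ) < r ^ μ := lt_of_lt_of_le one_pos hrpow1
  have hkey : r ^ μ + C < Real.exp r := by
    have h1 : (C + 2) * r ^ μ ≤ Real.exp r := by
      have := (le_div_iff₀ hrpow0).mp hrdiv
      linarith
    nlinarith
  refine ⟨r, hr0, ?_⟩
  intro hsub
  -- the test point
  set p : EuclideanSpace ℝ (Fin 2) := (WithLp.equiv 2 (Fin 2 → ℝ)).symm ![0, Real.exp r] with hp
  have hp0 : p 0 = 0 := rfl
  have hp1 : p 1 = Real.exp r := rfl
  -- p is in both r-thickenings
  have hmem0 : p ∈ cthickening r (cthickening s Z₀) := by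
    apply self_subset_cthickening
    apply self_subset_cthickening
    rw [hZ₀]; exact hp0
  have hmem1 : p ∈ cthickening r (cthickening s Z₁) := by
    set q : EuclideanSpace ℝ (Fin 2) := (WithLp.equiv 2 (Fin 2 → ℝ)).symm ![r, Real.exp r] with hq
    have hqZ : q ∈ cthickening s Z₁ := by
      apply self_subset_cthickening
      rw [hZ₁]; show q 1 = Real.exp (q 0); rfl
    apply mem_cthickening_of_dist_le p q r _ hqZ
    have : dist p q = r := by
      rw [EuclideanSpace.dist_eq, Fin.sum_univ_two]
      show Real.sqrt (dist (0:ℝ) r ^ 2 + dist (Real.exp r) (Real.exp r) ^ 2) = r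
      simp [Real.dist_eq, abs_of_nonneg hr0, Real.sqrt_sq hr0]
    exact le_of_eq this
  have hmemI := hsub ⟨hmem0, hmem1⟩
  rw [mem_cthickening_iff] at hmemI
  -- every point of the intersection has second coordinate ≤ C
  have hbound : ∀ q ∈ cthickening s Z₀ ∩ cthickening s Z₁, q 1 ≤ C := by
    rintro q ⟨hq0, hq1⟩
    rw [mem_cthickening_iff] at hq0 hq1
    have hq0' : |q 0| ≤ s := by
      have hle : ENNReal.ofReal |q 0| ≤ EMetric.infEdist q Z₀ := by
        apply EMetric.le_infEdist.mpr
        intro w hw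
        rw [edist_dist, ENNReal.ofReal_le_ofReal_iff dist_nonneg]
        rw [hZ₀] at hw
        have hw' : w 0 = 0 := hw
        have := coord_abs_le_dist q w 0
        rw [hw', sub_zero] at this
        exact this
      have := hle.trans hq0
      rwa [ENNReal.ofReal_le_ofReal_iff hs] at this
    -- find a point of Z₁ within s + 1 of q
    have hlt : EMetric.infEdist q Z₁ < ENNReal.ofReal (s + 1) :=
      lt_of_le_of_lt hq1 (by
        rw [ENNReal.ofReal_lt_ofReal_iff (by linarith)]; linarith)
    obtain ⟨w, hwZ, hwd⟩ := EMetric.infEdist_lt_iff.mp hlt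
    rw [edist_dist, ENNReal.ofReal_lt_ofReal_iff (by linarith)] at hwd
    rw [hZ₁] at hwZ
    have h0 : |q 0 - w 0| ≤ dist q w := coord_abs_le_dist q w 0
    have h1 : |q 1 - w 1| ≤ dist q w := coord_abs_le_dist q w 1
    have h0' := abs_le.mp (h0.trans hwd.le)
    have h1' := abs_le.mp (h1.trans hwd.le)
    have hq0'' := abs_le.mp hq0'
    have hw0 : w 0 ≤ 2 * s + 1 := by linarith [h0'.2]
    have hw1 : w 1 ≤ Real.exp (2 * s + 1) := by
      rw [hwZ]; exact Real.exp_le_exp.mpr hw0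
    have : q 1 ≤ w 1 + (s + 1) := by linarith [h1'.2]
    rw [hC]; linarith
  -- lower bound on the distance from p to the intersection
  have hlow : ENNReal.ofReal (Real.exp r - C) ≤
      EMetric.infEdist p (cthickening s Z₀ ∩ cthickening s Z₁) := by
    apply EMetric.le_infEdist.mpr
    intro q hq
    rw [edist_dist, ENNReal.ofReal_le_ofReal_iff dist_nonneg]
    have h1 : |p 1 - q 1| ≤ dist p q := coord_abs_le_dist p q 1
    have hb := hbound q hq
    have : Real.exp r - C ≤ p 1 - q 1 := by rw [hp1]; linarith
    linarith [le_abs_self (p 1 - q 1)]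
  have hfinal : ENNReal.ofReal (r ^ μ) < ENNReal.ofReal (Real.exp r - C) := by
    rw [ENNReal.ofReal_lt_ofReal_iff (by linarith)]
    linarith
  exact absurd (hmemI.trans_lt (hfinal.trans_le hlow)) (lt_irrefl _)
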